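/- Let A : ℝ → ℝ be continuously differentiable, 1-periodic and everywhere positive, N : ℝ → ℝ twice continuously differentiable and 1-periodic, and g : ℝ → ℝ continuous and 1-periodic, with N''(x) = −A(x)^{−1}A'(x)N'(x) + g(x) for all x. If |g(x)| ≤ M and |A(x)^{−1}A'(x)| ≤ β for all x, then |N'(x)| ≤ M e^{β} for all x ∈ ℝ. -/

import Mathlib

open Real

theorem gronwallBound_le_aux {β M t : ℝ} (hβ : 0 ≤ β) (hM : 0 ≤ M)
    (ht0 : 0 ≤ t) (ht1 : t ≤ 1) : gronwallBound 0 β M t ≤ M * Real.exp β := by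
  rcases eq_or_lt_of_le hβ with hβ0 | hβpos
  · subst hβ0
    rw [gronwallBound_K0]
    simp only [Real.exp_zero]
    nlinarith
  · rw [gronwallBound_of_K_ne_0 (ne_of_gt hβpos)]
    have h1 : Real.exp (β * t) - 1 ≤ β * t * Real.exp (β * t) := by
      have := Real.add_one_le_exp (-(β * t))
      have hE := Real.exp_pos (β * t)
      have hEe : Real.exp (-(β * t)) * Real.exp (β * t) = 1 := by
        rw [← Real.exp_add]; simp
      nlinarith
    have h2 : Real.exp (β * t) ≤ Real.exp β := by
      apply Real.exp_le_exp.mpr; nlinarith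
    have h3 : Real.exp (β * t) - 1 ≤ β * Real.exp β := by
      have hbt : β * t * Real.exp (β * t) ≤ β * Real.exp β := by
        have hE := (Real.exp_pos (β * t)).le
        have := mul_le_mul ht1 h2 hE zero_le_one
        nlinarith
      linarith
    have h4 : M / β * (Real.exp (β * t) - 1) ≤ M / β * (β * Real.exp β) := by
      apply mul_le_mul_of_nonneg_left h3 (by positivity)
    have : M / β * (β * Real.exp β) = M * Real.exp β := by
      field_simp
    simp only [zero_mul, zero_add]
    linarith [h4, this ▸ h4]

/-- Gronwall estimate for the spatial derivative of the lapse on the circle: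
if `N'' = -A⁻¹ A' N' + g` with `|g| ≤ M` and `|A⁻¹ A'| ≤ β`, all data `1`-periodic,
then `|N'| ≤ M e^β`. -/
theorem lapse_spatial_derivative_bound
    (A N g : ℝ → ℝ) (M β : ℝ)
    (hA : ContDiff ℝ 1 A) (hAper : Function.Periodic A 1) (hApos : ∀ x, 0 < A x)
    (hN : ContDiff ℝ 2 N) (hNper : Function.Periodic N 1)
    (hg : Continuous g) (hgper : Function.Periodic g 1)
    (heq : ∀ x, deriv (deriv N) x = -(A x)⁻¹ * deriv A x * deriv N x + g x)
    (hgM : ∀ x, |g x| ≤ M) (hAβ : ∀ x, |(A x)⁻¹ * deriv A x| ≤ β) :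
    ∀ x, |deriv N x| ≤ M * Real.exp β := by
  have hM : 0 ≤ M := (abs_nonneg _).trans (hgM 0)
  have hβ : 0 ≤ β := (abs_nonneg _).trans (hAβ 0)
  -- N' is C¹
  have hN' : ContDiff ℝ 1 (deriv N) := by
    have h := (contDiff_succ_iff_deriv.mp (by exact_mod_cast hN : ContDiff ℝ (1 + 1) N)).2
    exact h.2
  have hN'diff : Differentiable ℝ (deriv N) := hN'.differentiable one_ne_zero
  -- N' is periodic
  have hN'per : Function.Periodic (deriv N) 1 := by
    intro x
    have : (fun y => N (y + 1)) = N := funext fun y => hNper y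
    calc deriv N (x + 1) = deriv (fun y => N (y + 1)) x := by
          rw [deriv_comp_add_const]
      _ = deriv N x := by rw [this]
  -- N' vanishes somewhere
  have hNc : ContinuousOn N (Set.Icc 0 1) := (hN.continuous).continuousOn
  have hN01 : N 0 = N 1 := by
    have := hNper 0; simp at this; rw [this]
  obtain ⟨x₀, _, hx₀⟩ := exists_deriv_eq_zero one_pos hNc hN01
  -- Gronwall on [x₀, x₀ + 1]
  have key : ∀ y ∈ Set.Icc x₀ (x₀ + 1), ‖deriv N y‖ ≤ gronwallBound 0 β M (y - x₀) := by
    apply norm_le_gronwallBound_of_norm_deriv_right_le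
      (hN'.continuous.continuousOn)
      (fun y _ => ((hN'diff y).hasDerivAt).hasDerivWithinAt)
    · simp [hx₀]
    · intro y _
      rw [heq y]
      calc ‖-(A y)⁻¹ * deriv A y * deriv N y + g y‖
          ≤ ‖-(A y)⁻¹ * deriv A y * deriv N y‖ + ‖g y‖ := norm_add_le _ _
        _ ≤ β * ‖deriv N y‖ + M := by
            apply add_le_add
            · rw [norm_mul]
              apply mul_le_mul_of_nonneg_right _ (norm_nonneg _)
              have := hAβ y
              rw [Real.norm_eq_abs]
              calc |(-(A y)⁻¹ * deriv A y)| = |(A y)⁻¹ * deriv A y| := by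
                    rw [neg_mul, abs_neg]
                _ ≤ β := this
            · exact hgM y
  intro x
  obtain ⟨y, hy, hxy⟩ := hN'per.exists_mem_Ico one_pos x x₀
  rw [hxy]
  have hy' : y ∈ Set.Icc x₀ (x₀ + 1) := ⟨hy.1, hy.2.le⟩
  calc |deriv N y| = ‖deriv N y‖ := rfl
    _ ≤ gronwallBound 0 β M (y - x₀) := key y hy'
    _ ≤ M * Real.exp β := gronwallBound_le_aux hβ hM (by linarith [hy.1]) (by linarith [hy.2.le])
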